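/- Let G be a connected graph with colouring ω, and suppose a sequence S makes G monochromatic in colour d, where the final move of S changes the colour of a monochromatic component X₁ from d′ to d, merging it with monochromatic components X₂, …, X_r all of colour d. For each i, let S_i be the subsequence of the moves of S (excluding the final move) played in X_i. Then playing S_i in the isolated subgraph G[X_i] makes X_i monochromatic: in colour d′ for i = 1, and in colour d for i ≥ 2. In particular m(G[X_1], ω, d′) ≤ |S₁| and m(G[X_i], ω, d) ≤ |S_i| for i ≥ 2. -/

import Mathlib

noncomputable section

variable {V C : Type*}

/-- The monochromatic component of `v`: vertices reachable from `v` through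
vertices of the same colour. -/
def monoComp (G : SimpleGraph V) (ω : V → C) (v : V) : Set V :=
  {u | Relation.ReflTransGen (fun a b => G.Adj a b ∧ ω a = ω b) v u}

open Classical in
/-- Playing the single flood move `mv = (v, d)`: the monochromatic component of
`v` receives colour `d`. -/
def floodMove (G : SimpleGraph V) (ω : V → C) (mv : V × C) : V → C :=
  fun u => if u ∈ monoComp G ω mv.1 then mv.2 else ω u

/-- Playing a sequence of flood moves. -/
def play (G : SimpleGraph V) : (V → C) → List (V × C) → (V → C)
  | ω, [] => ω
  | ω, mv :: S => play G (floodMove G ω mv) S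

/-- A sequence `S` floods `G` with colour `d` if after playing it every vertex
has colour `d`. -/
def Floods (G : SimpleGraph V) (ω : V → C) (S : List (V × C)) (d : C) : Prop :=
  ∀ u, play G ω S u = d

/-- `m(G, ω, d)`: the minimum number of moves needed to make `G`
monochromatic in colour `d`. -/
def floodNum (G : SimpleGraph V) (ω : V → C) (d : C) : ℕ :=
  sInf {k | ∃ S : List (V × C), S.length = k ∧ Floods G ω S d}

/-- `m(G, ω)`: the minimum number of moves needed to make `G` monochromatic. -/
def floodNumMin (G : SimpleGraph V) (ω : V → C) : ℕ :=
  sInf {k | ∃ (S : List (V × C)) (d : C), S.length = k ∧ Floods G ω S d}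

open Classical in
/-- The subsequence of moves of `S` played in the vertex set `A`, viewed as
moves of the induced subgraph on `A`. -/
def restrictMoves (A : Set V) (S : List (V × C)) : List (↥A × C) :=
  S.filterMap (fun mv => if h : mv.1 ∈ A then some (⟨mv.1, h⟩, mv.2) else none)

/-- Moves of an induced subgraph on `A`, viewed as moves of the ambient graph. -/
def liftMoves (A : Set V) (S : List (↥A × C)) : List (V × C) :=
  S.map (fun mv => ((mv.1 : V), mv.2))

end

section auxlemmas

variable {V C : Type*}

lemma coarsen_step (G : SimpleGraph V) (ω : V → C) (mv : V × C) {a b : V}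
    (h : Relation.ReflTransGen (fun x y => G.Adj x y ∧ ω x = ω y) a b) :
    Relation.ReflTransGen
      (fun x y => G.Adj x y ∧ floodMove G ω mv x = floodMove G ω mv y) a b := by
  classical
  induction h with
  | refl => exact .refl
  | @tail b c h1 h2 ih =>
    refine ih.tail ⟨h2.1, ?_⟩
    by_cases hb : b ∈ monoComp G ω mv.1
    · have hc : c ∈ monoComp G ω mv.1 := Relation.ReflTransGen.tail hb ⟨h2.1, h2.2⟩
      simp [floodMove, hb, hc]
    · have hc : c ∉ monoComp G ω mv.1 := fun hc =>
        hb (Relation.ReflTransGen.tail hc ⟨h2.1.symm, h2.2.symm⟩)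
      simp [floodMove, hb, hc, h2.2]

lemma coarsen_play (G : SimpleGraph V) :
    ∀ (S : List (V × C)) (ω : V → C) {a b : V},
      Relation.ReflTransGen (fun x y => G.Adj x y ∧ ω x = ω y) a b →
      Relation.ReflTransGen (fun x y => G.Adj x y ∧ play G ω S x = play G ω S y) a b
  | [], _, _, _, h => h
  | mv :: S, ω, _, _, h => coarsen_play G S (floodMove G ω mv) (coarsen_step G ω mv h)

lemma monoComp_colour {G : SimpleGraph V} {ω : V → C} {u b : V}
    (h : b ∈ monoComp G ω u) : ω b = ω u := by
  have h' : Relation.ReflTransGen (fun a b => G.Adj a b ∧ ω a = ω b) u b := h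
  clear h
  induction h' with
  | refl => rfl
  | tail _ h2 ih => exact h2.2.symm.trans ih

lemma play_restrict (G : SimpleGraph V) (A : Set V) :
    ∀ (S : List (V × C)) (ω : V → C),
      (∀ a ∈ A, ∀ b, Relation.ReflTransGen
          (fun x y => G.Adj x y ∧ play G ω S x = play G ω S y) a b → b ∈ A) →
      ∀ a (ha : a ∈ A),
        play (G.induce A) (fun x : ↥A => ω x) (restrictMoves A S) ⟨a, ha⟩ = play G ω S a := by
  intro S
  induction S with
  | nil => intro ω _ a ha; rfl
  | cons mv S ih =>
    intro ω hcl a ha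
    classical
    have hcl' : ∀ a ∈ A, ∀ b, Relation.ReflTransGen
        (fun x y => G.Adj x y ∧ play G (floodMove G ω mv) S x =
          play G (floodMove G ω mv) S y) a b → b ∈ A := hcl
    by_cases hm : mv.1 ∈ A
    · have hsub : ∀ b ∈ monoComp G ω mv.1, b ∈ A := fun b hb =>
        hcl mv.1 hm b (coarsen_play G (mv :: S) ω hb)
      have hrw : restrictMoves A (mv :: S) = (⟨mv.1, hm⟩, mv.2) :: restrictMoves A S := by
        simp [restrictMoves, List.filterMap_cons, hm]
      have lift : ∀ b, Relation.ReflTransGen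
            (fun x y => G.Adj x y ∧ ω x = ω y) mv.1 b →
          ∀ hbA : b ∈ A, Relation.ReflTransGen
            (fun a b : ↥A => (G.induce A).Adj a b ∧ ω ↑a = ω ↑b) ⟨mv.1, hm⟩ ⟨b, hbA⟩ := by
        intro b hb
        induction hb with
        | refl => intro _; exact .refl
        | @tail b c h1 h2 ih2 =>
          intro hcA
          exact (ih2 (hsub b h1)).tail ⟨h2.1, h2.2⟩
      have proj : ∀ (x y : ↥A), Relation.ReflTransGen
            (fun a b : ↥A => (G.induce A).Adj a b ∧ ω ↑a = ω ↑b) x y →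
          Relation.ReflTransGen (fun a b => G.Adj a b ∧ ω a = ω b) ↑x ↑y := by
        intro x y h
        induction h with
        | refl => exact .refl
        | tail _ h2 ih2 => exact ih2.tail ⟨h2.1, h2.2⟩
      have hinit : (fun x : ↥A => floodMove G ω mv ↑x) =
          floodMove (G.induce A) (fun x : ↥A => ω ↑x) (⟨mv.1, hm⟩, mv.2) := by
        funext x
        by_cases hx : (x : V) ∈ monoComp G ω mv.1
        · have hx' : x ∈ monoComp (G.induce A) (fun y : ↥A => ω ↑y) ⟨mv.1, hm⟩ :=
            lift (↑x) hx x.2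
          simp [floodMove, hx, hx']
        · have hx' : x ∉ monoComp (G.induce A) (fun y : ↥A => ω ↑y) ⟨mv.1, hm⟩ :=
            fun hx' => hx (proj _ _ hx')
          simp [floodMove, hx, hx']
      rw [hrw]
      show play (G.induce A) (floodMove (G.induce A) (fun x : ↥A => ω ↑x) (⟨mv.1, hm⟩, mv.2))
        (restrictMoves A S) ⟨a, ha⟩ = play G (floodMove G ω mv) S a
      rw [← hinit]
      exact ih (floodMove G ω mv) hcl' a ha
    · have hrw : restrictMoves A (mv :: S) = restrictMoves A S := by
        simp [restrictMoves, List.filterMap_cons, hm]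
      have hinit : (fun x : ↥A => ω ↑x) = (fun x : ↥A => floodMove G ω mv ↑x) := by
        funext x
        have hx : (x : V) ∉ monoComp G ω mv.1 := by
          intro hx
          exact hm (hcl ↑x x.2 mv.1 (coarsen_play G (mv :: S) ω
            (by haveI : Std.Symm (fun x y : V => G.Adj x y ∧ ω x = ω y) :=
                  ⟨fun p q h => ⟨h.1.symm, h.2.symm⟩⟩
                exact Std.Symm.symm _ _ hx)))
        simp [floodMove, hx]
      rw [hrw]
      show play (G.induce A) (fun x : ↥A => ω ↑x) (restrictMoves A S) ⟨a, ha⟩ =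
        play G (floodMove G ω mv) S a
      rw [hinit]
      exact ih (floodMove G ω mv) hcl' a ha

lemma component_flood (G : SimpleGraph V) (ω : V → C) (S' : List (V × C)) (u : V) :
    Floods (G.induce (monoComp G (play G ω S') u)) (fun a => ω ↑a)
      (restrictMoves (monoComp G (play G ω S') u) S') (play G ω S' u) := by
  rintro ⟨a, ha⟩
  have hcl : ∀ p ∈ monoComp G (play G ω S') u, ∀ b,
      Relation.ReflTransGen (fun x y => G.Adj x y ∧ play G ω S' x = play G ω S' y) p b →
      b ∈ monoComp G (play G ω S') u := fun p hp b hb => Relation.ReflTransGen.trans hp hb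
  have h := play_restrict G (monoComp G (play G ω S') u) S' ω hcl a ha
  exact h.trans (monoComp_colour ha)

end auxlemmas

/-- suppose `S' ++ [(v, d)]` floods the connected graph `G` with
colour `d`, where before the final move the monochromatic component `X 0` of
`v` has colour `d' ≠ d` and the final move merges it with monochromatic
components `X 1, …, X r`, each of colour `d` and adjacent to `X 0`.  Then for
each `i`, the subsequence of `S'` played in `X i`, run in the isolated induced
subgraph `G[X i]`, makes `X i` monochromatic — in colour `d'` for `i = 0` and
in colour `d` for `i ≠ 0` — and in particular `m(G[X 0], ω, d') ≤ |S_0|` and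
`m(G[X i], ω, d) ≤ |S_i|` for `i ≠ 0`. -/
theorem stmt14 {V C : Type*} [Fintype V] (G : SimpleGraph V) (hG : G.Connected)
    (ω : V → C) (S' : List (V × C)) (v : V) (d d' : C) (hne : d' ≠ d)
    (hfloods : Floods G ω (S' ++ [(v, d)]) d)
    (hcol : play G ω S' v = d')
    (r : ℕ) (X : Fin (r + 1) → Set V)
    (hX0 : X 0 = monoComp G (play G ω S') v)
    (hXi : ∀ i : Fin (r + 1), i ≠ 0 →
      ∃ u : V, X i = monoComp G (play G ω S') u ∧ play G ω S' u = d ∧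
        ∃ a ∈ X 0, ∃ b ∈ X i, G.Adj a b) :
    (Floods (G.induce (X 0)) (fun a => ω a) (restrictMoves (X 0) S') d' ∧
      floodNum (G.induce (X 0)) (fun a => ω a) d' ≤ (restrictMoves (X 0) S').length) ∧
    ∀ i : Fin (r + 1), i ≠ 0 →
      Floods (G.induce (X i)) (fun a => ω a) (restrictMoves (X i) S') d ∧
      floodNum (G.induce (X i)) (fun a => ω a) d ≤ (restrictMoves (X i) S').length := by
  constructor
  · have hfl : Floods (G.induce (X 0)) (fun a => ω ↑a) (restrictMoves (X 0) S') d' := by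
      rw [hX0, ← hcol]
      exact component_flood G ω S' v
    exact ⟨hfl, Nat.sInf_le ⟨restrictMoves (X 0) S', rfl, hfl⟩⟩
  · intro i hi
    obtain ⟨u, hXu, hcu, -⟩ := hXi i hi
    have hfl : Floods (G.induce (X i)) (fun a => ω ↑a) (restrictMoves (X i) S') d := by
      rw [hXu, ← hcu]
      exact component_flood G ω S' u
    exact ⟨hfl, Nat.sInf_le ⟨restrictMoves (X i) S', rfl, hfl⟩⟩
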